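/- For integers 0 < k ≤ n and a nonzero vector x ∈ ℝⁿ with at most k strictly positive entries, one has cos(x, 𝟙) = √(k/n) if and only if x has exactly k entries equal to one common positive value and its remaining n − k entries equal to zero. -/

import Mathlib

open Matrix BigOperators

/-- The Euclidean norm of a real vector. -/
noncomputable def nrm {m : Type*} [Fintype m] (v : m → ℝ) : ℝ :=
  Real.sqrt (∑ i, (v i) ^ 2)

set_option maxHeartbeats 1600000 in
/-- for `0 < k ≤ n` and a nonzero `x` with at most `k` strictly positive
entries, `cos(x, 𝟙) = √(k/n)` iff `x` has exactly `k` entries equal to a common positive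
value and all its remaining entries equal to zero. -/
theorem cos_with_ones_eq_iff
    (n k : ℕ) (hk : 0 < k) (hkn : k ≤ n)
    (x : Fin n → ℝ) (hx : x ≠ 0)
    (hcard : (Finset.univ.filter fun i => 0 < x i).card ≤ k) :
    (∑ i, x i) / (Real.sqrt n * nrm x) = Real.sqrt ((k : ℝ) / n) ↔
      ∃ t : ℝ, 0 < t ∧ (Finset.univ.filter fun i => x i = t).card = k ∧
        ∀ i, x i = t ∨ x i = 0 := by
  have hn : 0 < n := lt_of_lt_of_le hk hkn
  have hnR : (0:ℝ) < n := by exact_mod_cast hn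
  have hkR : (0:ℝ) < k := by exact_mod_cast hk
  have hsumsq : 0 < ∑ i, (x i)^2 := by
    obtain ⟨i, hi⟩ := Function.ne_iff.mp hx
    exact Finset.sum_pos' (fun j _ => sq_nonneg _)
      ⟨i, Finset.mem_univ i, lt_of_le_of_ne (sq_nonneg _) (Ne.symm (pow_ne_zero 2 hi))⟩
  have hnrm : 0 < nrm x := Real.sqrt_pos.mpr hsumsq
  have hnrmsq : (nrm x)^2 = ∑ i, (x i)^2 := Real.sq_sqrt hsumsq.le
  have hsqrtn : (0:ℝ) < Real.sqrt n := Real.sqrt_pos.mpr hnR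
  have hsqrtk : (0:ℝ) < Real.sqrt k := Real.sqrt_pos.mpr hkR
  have hkk : Real.sqrt k * Real.sqrt k = (k:ℝ) := Real.mul_self_sqrt hkR.le
  have hdiv : Real.sqrt ((k:ℝ)/n) = Real.sqrt k / Real.sqrt n := Real.sqrt_div hkR.le n
  constructor
  · intro h
    set S := Finset.univ.filter (fun i => 0 < x i) with hS
    -- turn hypothesis into sum equation
    have hEq : ∑ i, x i = Real.sqrt k * nrm x := by
      rw [hdiv] at h
      field_simp at h
      nlinarith [h]
    have hsum_pos : 0 < ∑ i, x i := by rw [hEq]; positivity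
    have hkey : (∑ i, x i)^2 = k * ∑ i, (x i)^2 := by
      rw [hEq, mul_pow, Real.sq_sqrt hkR.le, hnrmsq]
    have hsplit : ∑ i ∈ S, x i + ∑ i ∈ Finset.univ.filter (fun i => ¬ 0 < x i), x i
        = ∑ i, x i := Finset.sum_filter_add_sum_filter_not _ _ _
    have hoffnp : ∑ i ∈ Finset.univ.filter (fun i => ¬ 0 < x i), x i ≤ 0 :=
      Finset.sum_nonpos (fun i hi => le_of_not_gt (Finset.mem_filter.mp hi).2)
    set T := ∑ i ∈ S, x i with hT
    set Q := ∑ i ∈ S, (x i)^2 with hQ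
    have hA : ∑ i, x i ≤ T := by linarith
    have hT_pos : 0 < T := lt_of_lt_of_le hsum_pos hA
    have hSne : S.Nonempty := by
      by_contra hne
      rw [Finset.not_nonempty_iff_eq_empty] at hne
      rw [hT, hne, Finset.sum_empty] at hT_pos
      exact lt_irrefl 0 hT_pos
    have hs_pos : 0 < (S.card : ℝ) := by
      exact_mod_cast Finset.card_pos.mpr hSne
    set c : ℝ := T / S.card with hc
    have hexp : ∑ i ∈ S, (x i - c)^2 = Q - 2*c*T + S.card * c^2 := by
      have hh : ∀ i ∈ S, (x i - c)^2 = (x i)^2 - 2*c*(x i) + c^2 := fun i _ => by ring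
      rw [Finset.sum_congr rfl hh, Finset.sum_add_distrib, Finset.sum_sub_distrib,
        Finset.sum_const, nsmul_eq_mul, ← Finset.mul_sum]
    have hexp' : ∑ i ∈ S, (x i - c)^2 = Q - T^2 / S.card := by
      rw [hexp, hc]; field_simp; ring
    have h2 : T^2 ≤ S.card * Q := by
      have hnn := Finset.sum_nonneg (fun i (_ : i ∈ S) => sq_nonneg (x i - c))
      rw [hexp'] at hnn
      have h4 : (0:ℝ) ≤ S.card * (Q - T^2 / S.card) := by positivity
      have h5 : (S.card:ℝ) * (Q - T^2 / S.card) = S.card * Q - T^2 := by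
        field_simp
      linarith
    have hQle : Q ≤ ∑ i, (x i)^2 :=
      Finset.sum_le_sum_of_subset_of_nonneg (Finset.subset_univ S)
        (fun i _ _ => sq_nonneg _)
    have hQ_nonneg : 0 ≤ Q := Finset.sum_nonneg fun i _ => sq_nonneg _
    have hsk : (S.card : ℝ) ≤ k := by exact_mod_cast hcard
    have h3 : (S.card : ℝ) * Q ≤ k * ∑ i, (x i)^2 :=
      mul_le_mul hsk hQle hQ_nonneg hkR.le
    have h1 : (∑ i, x i)^2 ≤ T^2 := pow_le_pow_left₀ hsum_pos.le hA 2
    -- equalities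
    have e1 : (∑ i, x i)^2 = T^2 := le_antisymm h1 (by linarith)
    have eUT : ∑ i, x i = T := by
      by_contra hne
      have hlt : ∑ i, x i < T := lt_of_le_of_ne hA hne
      nlinarith [hlt, hsum_pos, e1]
    have hoff0 : ∀ i ∈ Finset.univ.filter (fun i => ¬ 0 < x i), x i = 0 := by
      rw [← Finset.sum_eq_zero_iff_of_nonpos
        (fun i hi => le_of_not_gt (Finset.mem_filter.mp hi).2)]
      linarith
    have hQeq : Q = ∑ i, (x i)^2 := by
      rw [hQ, ← Finset.sum_filter_add_sum_filter_not Finset.univ (fun i => 0 < x i)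
        (fun i => (x i)^2)]
      have hz : ∑ i ∈ Finset.univ.filter (fun i => ¬ 0 < x i), (x i)^2 = 0 :=
        Finset.sum_eq_zero (fun i hi => by rw [hoff0 i hi]; ring)
      rw [hz, add_zero]
    have hQpos : 0 < Q := hQeq ▸ hsumsq
    have hmul : (k:ℝ) * Q = k * ∑ i, (x i)^2 := by rw [hQeq]
    have eT2 : T^2 = S.card * Q := by linarith
    have esk : (S.card : ℝ) = k := by
      have hcc : (S.card : ℝ) * Q = k * Q := by linarith
      exact mul_right_cancel₀ (ne_of_gt hQpos) hcc
    -- constancy on S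
    have hzero : ∑ i ∈ S, (x i - c)^2 = 0 := by
      rw [hexp', eT2]
      field_simp; ring
    have hconst : ∀ i ∈ S, x i = c := by
      intro i hi
      have hz := (Finset.sum_eq_zero_iff_of_nonneg
        (fun j (_ : j ∈ S) => sq_nonneg (x j - c))).mp hzero i hi
      have hz2 := pow_eq_zero_iff (n := 2) (by norm_num) |>.mp hz
      linarith [sub_eq_zero.mp hz2]
    have hc_pos : 0 < c := by
      obtain ⟨i0, hi0⟩ := hSne
      have hp := (Finset.mem_filter.mp hi0).2
      rw [← hconst i0 hi0]; exact hp
    refine ⟨c, hc_pos, ?_, ?_⟩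
    · have hset : Finset.univ.filter (fun i => x i = c) = S := by
        ext i
        simp only [Finset.mem_filter, Finset.mem_univ, true_and, hS]
        constructor
        · intro h'; rw [h']; exact hc_pos
        · intro h'; exact hconst i (by simp [hS, h'])
      rw [hset]
      exact_mod_cast esk
    · intro i
      by_cases hi : 0 < x i
      · exact Or.inl (hconst i (by simp [hS, hi]))
      · exact Or.inr (hoff0 i (by simp only [Finset.mem_filter, Finset.mem_univ, true_and]; exact hi))
  · rintro ⟨t, ht, hcardt, hall⟩
    have hoffA : ∀ i ∈ Finset.univ.filter (fun i => ¬ x i = t), x i = 0 := by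
      intro i hi
      rcases hall i with h' | h'
      · exact absurd h' (Finset.mem_filter.mp hi).2
      · exact h'
    have hsum : ∑ i, x i = k * t := by
      rw [← Finset.sum_filter_add_sum_filter_not Finset.univ (fun i => x i = t)]
      rw [Finset.sum_eq_zero hoffA, add_zero]
      rw [Finset.sum_congr rfl (fun i hi => (Finset.mem_filter.mp hi).2),
        Finset.sum_const, nsmul_eq_mul, hcardt]
    have hsumsq' : ∑ i, (x i)^2 = k * t^2 := by
      rw [← Finset.sum_filter_add_sum_filter_not Finset.univ (fun i => x i = t)
        (fun i => (x i)^2)]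
      have hz2 : ∑ i ∈ Finset.univ.filter (fun i => ¬ x i = t), (x i)^2 = 0 :=
        Finset.sum_eq_zero (fun i hi => by rw [hoffA i hi]; ring)
      rw [hz2, add_zero]
      rw [Finset.sum_congr rfl (fun i hi => by rw [(Finset.mem_filter.mp hi).2]),
        Finset.sum_const, nsmul_eq_mul, hcardt]
    have hnrmx : nrm x = Real.sqrt k * t := by
      rw [nrm, hsumsq', Real.sqrt_mul hkR.le, Real.sqrt_sq ht.le]
    rw [hsum, hnrmx, hdiv]
    rw [div_eq_div_iff (by positivity) (ne_of_gt hsqrtn)]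
    rw [show Real.sqrt k * (Real.sqrt n * (Real.sqrt k * t))
        = (Real.sqrt k * Real.sqrt k) * (Real.sqrt n * t) by ring, hkk]
    ring
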